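/- Let n ≥ 0, r ≥ 2 and 1 ≤ t ≤ r−1 be integers. Then the total number of parts congruent to t mod r in all r-regular partitions of n equals the total number of parts congruent to t mod r in all r-flat partitions of n: Σ_{λ∈O_r(n)} ℓ_t(λ) = Σ_{λ∈F_r(n)} ℓ_t(λ). -/

import Mathlib

open scoped Classical

namespace BeckPaper

/-- The parts of a partition, sorted in non-increasing order. -/
def partsList {n : ℕ} (p : n.Partition) : List ℕ := p.parts.sort (· ≥ ·)

/-- The `i`-th part of a partition (`1`-indexed); `0` if `i` exceeds the number of parts. -/
def part {n : ℕ} (p : n.Partition) (i : ℕ) : ℕ := (partsList p).getD (i - 1) 0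

/-- `ℓ(λ)`: the number of parts of `λ`. -/
def numParts {n : ℕ} (p : n.Partition) : ℕ := Multiset.card p.parts

/-- `ℓ_t(λ)`: the number of parts of `λ` congruent to `t` modulo `r`. -/
def lMod (r t : ℕ) {n : ℕ} (p : n.Partition) : ℕ :=
  Multiset.card (p.parts.filter (fun x => x % r = t % r))

/-- `ℓ̄_t(λ)`: the number of different part sizes appearing at least `t` times in `λ`. -/
def lRep (t : ℕ) {n : ℕ} (p : n.Partition) : ℕ :=
  (p.parts.toFinset.filter (fun s => t ≤ p.parts.count s)).card

/-- `ℓ̄(λ)`: the number of different part sizes of `λ`. -/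
def lDist {n : ℕ} (p : n.Partition) : ℕ := p.parts.toFinset.card

/-- `d_t(λ)`: the number of indices `1 ≤ i ≤ ℓ(λ)` with `λ_i − λ_{i+1} ≥ t`. -/
def dCount (t : ℕ) {n : ℕ} (p : n.Partition) : ℕ :=
  ((Finset.Icc 1 (numParts p)).filter (fun i => t ≤ part p i - part p (i + 1))).card

/-- `λ ∈ O_r(n)`: no part is divisible by `r`. -/
def IsRegular (r : ℕ) {n : ℕ} (p : n.Partition) : Prop := ∀ x ∈ p.parts, ¬ r ∣ x

/-- `λ ∈ D_r(n)`: no part appears more than `r − 1` times. -/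
def IsRestricted (r : ℕ) {n : ℕ} (p : n.Partition) : Prop :=
  ∀ s : ℕ, p.parts.count s ≤ r - 1

/-- `λ ∈ F_r(n)`: all differences of consecutive parts (with `λ_{k+1} = 0`) are `≤ r − 1`. -/
def IsFlat (r : ℕ) {n : ℕ} (p : n.Partition) : Prop :=
  ∀ i, 1 ≤ i → i ≤ numParts p → part p i - part p (i + 1) ≤ r - 1

/-- `λ ∈ O_{1,r}(n)`: the set of part sizes divisible by `r` has exactly one element. -/
def IsOneRegular (r : ℕ) {n : ℕ} (p : n.Partition) : Prop :=
  (p.parts.toFinset.filter (fun s => r ∣ s)).card = 1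

/-- `λ ∈ D_{1,r}(n)`: exactly one part size appears at least `r` times. -/
def IsOneRestricted (r : ℕ) {n : ℕ} (p : n.Partition) : Prop :=
  (p.parts.toFinset.filter (fun s => r ≤ p.parts.count s)).card = 1

/-- `λ ∈ F_{1,r}(n)`: exactly one difference of consecutive parts is `≥ r`, and all
other such differences are `≤ r − 1`. -/
def IsOneFlat (r : ℕ) {n : ℕ} (p : n.Partition) : Prop :=
  ∃ i, (1 ≤ i ∧ i ≤ numParts p ∧ r ≤ part p i - part p (i + 1)) ∧
    ∀ j, 1 ≤ j → j ≤ numParts p → j ≠ i → part p j - part p (j + 1) ≤ r - 1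

/-- `λ ∈ T_r(n)`: exactly one part size has multiplicity at least `r`, and that
multiplicity is strictly less than `2r`. -/
def IsInT (r : ℕ) {n : ℕ} (p : n.Partition) : Prop :=
  ∃ s : ℕ, (r ≤ p.parts.count s ∧ p.parts.count s < 2 * r) ∧
    ∀ s' : ℕ, r ≤ p.parts.count s' → s' = s

def nge {m : ℕ} (p : m.Partition) (i : ℕ) : ℕ :=
  Multiset.card (p.parts.filter (fun x => i ≤ x))

lemma filter_len_cons_pos {x b : ℕ} (tl : List ℕ) (hbx : b ≤ x) :
    (List.filter (fun y => decide (b ≤ y)) (x :: tl)).length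
      = (List.filter (fun y => decide (b ≤ y)) tl).length + 1 := by
  have hd : decide (b ≤ x) = true := by simpa using hbx
  simp [List.filter_cons, hd]

lemma filter_len_cons_neg {x b : ℕ} (tl : List ℕ) (hbx : ¬ b ≤ x) :
    (List.filter (fun y => decide (b ≤ y)) (x :: tl)).length
      = (List.filter (fun y => decide (b ≤ y)) tl).length := by
  have hd : decide (b ≤ x) = false := by simpa using hbx
  simp [List.filter_cons, hd]

lemma filter_len_nil_of_head {x b : ℕ} (tl : List ℕ) (hbx : ¬ b ≤ x)
    (hsort : ∀ y ∈ tl, y ≤ x) :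
    (List.filter (fun y => decide (b ≤ y)) tl).length = 0 := by
  rw [List.length_eq_zero_iff, List.filter_eq_nil_iff]
  intro y hy
  have := hsort y hy
  simp only [decide_eq_true_eq]
  omega

/-- core duality for sorted lists -/
lemma list_duality (L : List ℕ) (hL : L.Pairwise (· ≥ ·)) :
    ∀ a b : ℕ, 1 ≤ a → 1 ≤ b →
      (a ≤ (L.filter (fun y => b ≤ y)).length ↔ b ≤ L.getD (a - 1) 0) := by
  induction L with
  | nil =>
    intro a b ha hb
    simp only [List.filter_nil, List.length_nil, List.getD_nil]
    omega
  | cons x tl ih =>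
    intro a b ha hb
    have hsort := List.pairwise_cons.mp hL
    have ihtl := ih hsort.2
    have hsort' : ∀ y ∈ tl, y ≤ x := fun y hy => hsort.1 y hy
    rcases Nat.exists_eq_add_of_le ha with ⟨a', rfl⟩
    cases a' with
    | zero =>
      simp only [Nat.add_zero, Nat.sub_self, List.getD_cons_zero]
      by_cases hbx : b ≤ x
      · rw [filter_len_cons_pos tl hbx]
        constructor
        · intro _; exact hbx
        · intro _; omega
      · rw [filter_len_cons_neg tl hbx, filter_len_nil_of_head tl hbx hsort']
        constructor
        · intro h; omega
        · intro h; omega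
    | succ a'' =>
      have hgd : (x :: tl).getD (1 + (a'' + 1) - 1) 0 = tl.getD (1 + a'' - 1) 0 := by
        have : 1 + (a'' + 1) - 1 = (1 + a'' - 1) + 1 := by omega
        rw [this]
        simp
      rw [hgd, ← ihtl (1 + a'') b (by omega) hb]
      by_cases hbx : b ≤ x
      · rw [filter_len_cons_pos tl hbx]
        omega
      · rw [filter_len_cons_neg tl hbx]
        have h0 := filter_len_nil_of_head tl hbx hsort'
        omega



lemma nge_eq_filter_length {m : ℕ} (p : m.Partition) (b : ℕ) :
    nge p b = ((partsList p).filter (fun y => decide (b ≤ y))).length := by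
  have h : p.parts = ↑(partsList p) := (Multiset.sort_eq _ _).symm
  rw [nge, h, Multiset.filter_coe, Multiset.coe_card]

/-- the key duality: at least `a` parts are `≥ b` iff the `a`-th part is `≥ b` -/
lemma le_nge_iff {m : ℕ} (p : m.Partition) {a b : ℕ} (ha : 1 ≤ a) (hb : 1 ≤ b) :
    a ≤ nge p b ↔ b ≤ part p a := by
  rw [nge_eq_filter_length, part]
  exact list_duality (partsList p) (Multiset.pairwise_sort (s := p.parts) (r := (· ≥ ·))) a b ha hb

lemma parts_le {m : ℕ} (p : m.Partition) {x : ℕ} (hx : x ∈ p.parts) : x ≤ m := by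
  have := Multiset.single_le_sum (fun y _ => Nat.zero_le y) x hx
  rwa [p.parts_sum] at this

lemma nge_eq_zero {m : ℕ} (p : m.Partition) {i : ℕ} (hi : m < i) : nge p i = 0 := by
  rw [nge, Multiset.card_eq_zero, Multiset.filter_eq_nil]
  intro x hx
  have := parts_le p hx
  omega

lemma nge_anti {m : ℕ} (p : m.Partition) {i j : ℕ} (hij : i ≤ j) : nge p j ≤ nge p i := by
  rw [nge, nge]
  apply Multiset.card_le_card
  apply Multiset.monotone_filter_right
  exact fun x hx => le_trans hij hx

lemma nge_le_card {m : ℕ} (p : m.Partition) (i : ℕ) :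
    nge p i ≤ Multiset.card p.parts := Multiset.card_le_card (Multiset.filter_le _ _)

lemma count_eq_nge_sub {m : ℕ} (p : m.Partition) {s : ℕ} (hs : 1 ≤ s) :
    p.parts.count s = nge p s - nge p (s + 1) := by
  have hsplit := Multiset.filter_add_not (fun x => s + 1 ≤ x) (Multiset.filter (fun x => s ≤ x) p.parts)
  have h1 : Multiset.filter (fun x => s + 1 ≤ x) (Multiset.filter (fun x => s ≤ x) p.parts)
      = Multiset.filter (fun x => s + 1 ≤ x) p.parts := by
    rw [Multiset.filter_filter]
    apply Multiset.filter_congr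
    intro x _
    constructor
    · intro h; exact h.1
    · intro h; exact ⟨h, by omega⟩
  have h2 : Multiset.filter (fun x => ¬ (s + 1 ≤ x)) (Multiset.filter (fun x => s ≤ x) p.parts)
      = Multiset.filter (fun x => s = x) p.parts := by
    rw [Multiset.filter_filter]
    apply Multiset.filter_congr
    intro x _
    constructor
    · intro h; omega
    · intro h; omega
  rw [h1, h2] at hsplit
  have hcard := congrArg Multiset.card hsplit
  rw [Multiset.card_add] at hcard
  have hcnt : p.parts.count s = Multiset.card (Multiset.filter (fun x => s = x) p.parts) := by
    rw [Multiset.count, Multiset.countP_eq_card_filter]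
  rw [hcnt, nge, nge]
  omega

lemma part_le {m : ℕ} (p : m.Partition) (i : ℕ) : part p i ≤ m := by
  rw [part]
  rcases Nat.lt_or_ge (i - 1) (partsList p).length with h | h
  · have hmem : (partsList p).getD (i-1) 0 ∈ partsList p := by
      rw [List.getD_eq_getElem _ _ h]
      exact List.getElem_mem h
    apply parts_le p
    rw [← Multiset.sort_eq (s := p.parts) (r := (· ≥ ·))]
    exact_mod_cast hmem
  · rw [List.getD_eq_default _ _ h]
    exact Nat.zero_le m

lemma part_eq_zero {m : ℕ} (p : m.Partition) {i : ℕ} (hi : numParts p < i) :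
    part p i = 0 := by
  have hlen : (partsList p).length = numParts p := by
    rw [partsList, numParts, Multiset.length_sort]
  rw [part, List.getD_eq_default _ _ (by omega)]



lemma sum_nge_aux (m : ℕ) (s : Multiset ℕ) (hle : ∀ x ∈ s, x ≤ m) :
    ∑ k ∈ Finset.range m, Multiset.card (s.filter (fun x => k + 1 ≤ x)) = s.sum := by
  induction s using Multiset.induction_on with
  | empty => simp
  | cons a s ih =>
    have ha : a ≤ m := hle a (Multiset.mem_cons_self a s)
    have ihs := ih (fun x hx => hle x (Multiset.mem_cons_of_mem hx))
    simp only [Multiset.filter_cons, Multiset.card_add]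
    rw [Finset.sum_add_distrib, ihs, Multiset.sum_cons]
    have : ∀ k : ℕ, Multiset.card (if k + 1 ≤ a then ({a} : Multiset ℕ) else 0)
        = if k + 1 ≤ a then 1 else 0 := by
      intro k
      split_ifs <;> simp
    simp only [this]
    have : ∑ k ∈ Finset.range m, (if k + 1 ≤ a then 1 else 0) = a := by
      rw [← Finset.card_filter]
      have : (Finset.range m).filter (fun k => k + 1 ≤ a) = Finset.range a := by
        ext k
        simp only [Finset.mem_filter, Finset.mem_range]
        omega
      rw [this, Finset.card_range]
    rw [this]

/-- the conjugate partition -/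
def conj {m : ℕ} (p : m.Partition) : m.Partition :=
  Nat.Partition.ofSums m ((Multiset.range m).map (fun k => nge p (k + 1)))
    (by
      have h : ((Multiset.range m).map (fun k => nge p (k + 1))).sum
          = ∑ k ∈ Finset.range m, nge p (k + 1) := rfl
      rw [h]
      simp only [nge]
      exact (sum_nge_aux m p.parts (fun x hx => parts_le p hx)).trans p.parts_sum)

lemma card_filter_conj {m : ℕ} (p : m.Partition) (Q : ℕ → Prop) [DecidablePred Q] (h0 : ¬ Q 0) :
    Multiset.card ((conj p).parts.filter Q)
      = ((Finset.range m).filter (fun k => Q (nge p (k + 1)))).card := by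
  rw [conj, Nat.Partition.ofSums_parts, Multiset.filter_filter]
  have h1 : Multiset.filter (fun a => Q a ∧ a ≠ 0) ((Multiset.range m).map (fun k => nge p (k + 1)))
      = Multiset.filter Q ((Multiset.range m).map (fun k => nge p (k + 1))) := by
    apply Multiset.filter_congr
    intro x _
    constructor
    · intro h; exact h.1
    · intro h
      refine ⟨h, ?_⟩
      intro hx0
      rw [hx0] at h
      exact h0 h
  rw [h1, ← Multiset.countP_eq_card_filter, Multiset.countP_map]
  have h2 : (Finset.filter (fun k => Q (nge p (k + 1))) (Finset.range m)).card
      = Multiset.card (Multiset.filter (fun k => Q (nge p (k + 1))) (Multiset.range m)) := by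
    rw [Finset.card, Finset.filter_val, Finset.range_val]
  rw [h2, ← Multiset.countP_eq_card_filter]

/-- `nge` of the conjugate is `part` -/
lemma nge_conj {m : ℕ} (p : m.Partition) {i : ℕ} (hi : 1 ≤ i) :
    nge (conj p) i = part p i := by
  rw [nge, card_filter_conj p (fun x => i ≤ x) (by omega)]
  have h : (Finset.range m).filter (fun k => i ≤ nge p (k + 1)) = Finset.range (part p i) := by
    ext k
    simp only [Finset.mem_filter, Finset.mem_range]
    constructor
    · intro ⟨hkm, hk⟩
      have := (le_nge_iff p hi (by omega)).mp hk
      omega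
    · intro hk
      have hle : part p i ≤ m := part_le p i
      have : i ≤ nge p (k + 1) := (le_nge_iff p hi (by omega)).mpr (by omega)
      exact ⟨by omega, this⟩
  rw [h, Finset.card_range]

lemma part_conj {m : ℕ} (p : m.Partition) {s : ℕ} (hs : 1 ≤ s) :
    part (conj p) s = nge p s := by
  have key : ∀ i : ℕ, 1 ≤ i → (i ≤ part (conj p) s ↔ i ≤ nge p s) := by
    intro i hi
    rw [← le_nge_iff (conj p) hs hi, nge_conj p hi, le_nge_iff p hi hs]
  rcases Nat.eq_zero_or_pos (part (conj p) s) with h | h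
  · rcases Nat.eq_zero_or_pos (nge p s) with h' | h'
    · omega
    · exfalso
      have := (key (nge p s) h').mpr le_rfl
      omega
  · rcases Nat.eq_zero_or_pos (nge p s) with h' | h'
    · exfalso
      have := (key (part (conj p) s) h).mp le_rfl
      omega
    · have h1 := (key (part (conj p) s) h).mp le_rfl
      have h2 := (key (nge p s) h').mpr le_rfl
      omega

lemma count_conj {m : ℕ} (p : m.Partition) {s : ℕ} (hs : 1 ≤ s) :
    (conj p).parts.count s = part p s - part p (s + 1) := by
  rw [count_eq_nge_sub (conj p) hs, nge_conj p hs, nge_conj p (by omega)]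

lemma conj_conj {m : ℕ} (p : m.Partition) : conj (conj p) = p := by
  apply Nat.Partition.ext
  rw [Multiset.ext]
  intro s
  rcases Nat.eq_zero_or_pos s with rfl | hs
  · rw [Multiset.count_eq_zero.mpr, Multiset.count_eq_zero.mpr]
    · intro h
      exact Nat.lt_irrefl 0 (p.parts_pos h)
    · intro h
      exact Nat.lt_irrefl 0 ((conj (conj p)).parts_pos h)
  · rw [count_conj (conj p) hs, part_conj p hs, part_conj p (by omega : 1 ≤ s + 1),
      count_eq_nge_sub p hs]



/-- the column statistic: number of `i < N` with `nge μ (i+1) ≡ t [MOD r]` -/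
def chat (r t N : ℕ) {m : ℕ} (μ : m.Partition) : ℕ :=
  ((Finset.range N).filter (fun k => nge μ (k + 1) % r = t % r)).card

lemma chat_ext (r t : ℕ) {m : ℕ} (μ : m.Partition) {N : ℕ} (hmN : m ≤ N) (ht : t % r ≠ 0) :
    chat r t N μ = chat r t m μ := by
  rw [chat, chat]
  congr 1
  ext k
  simp only [Finset.mem_filter, Finset.mem_range]
  constructor
  · rintro ⟨hk1, hk2⟩
    refine ⟨?_, hk2⟩
    by_contra hge
    have hmk : m < k + 1 := by omega
    rw [nge_eq_zero μ hmk, Nat.zero_mod] at hk2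
    exact ht hk2.symm
  · rintro ⟨hk1, hk2⟩
    exact ⟨by omega, hk2⟩

lemma lMod_conj {r t : ℕ} {m : ℕ} (p : m.Partition) (ht : t % r ≠ 0) :
    lMod r t (conj p) = chat r t m p := by
  rw [lMod, chat, card_filter_conj p (fun x => x % r = t % r)]
  intro h
  rw [Nat.zero_mod] at h
  exact ht h.symm

lemma isFlat_iff_isRestricted_conj {r : ℕ} (hr : 2 ≤ r) {m : ℕ} (p : m.Partition) :
    IsFlat r p ↔ IsRestricted r (conj p) := by
  constructor
  · intro hf s
    rcases Nat.eq_zero_or_pos s with rfl | hs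
    · rw [Multiset.count_eq_zero.mpr]
      · omega
      · intro h
        exact Nat.lt_irrefl 0 ((conj p).parts_pos h)
    · rw [count_conj p hs]
      rcases Nat.lt_or_ge (numParts p) s with h | h
      · rw [part_eq_zero p h]
        omega
      · exact hf s hs h
  · intro hres i hi _
    rw [← count_conj p hi]
    exact hres i

lemma isFlat_conj_of_isRestricted {r : ℕ} (hr : 2 ≤ r) {m : ℕ} (μ : m.Partition)
    (h : IsRestricted r μ) : IsFlat r (conj μ) := by
  rw [isFlat_iff_isRestricted_conj hr, conj_conj]
  exact h

/-- transfer over all partitions of `m` -/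
lemma sum_chat_eq_sum_lMod (r t : ℕ) (ht : t % r ≠ 0) {m N : ℕ} (hmN : m ≤ N) :
    ∑ μ ∈ (Finset.univ : Finset (Nat.Partition m)), chat r t N μ
      = ∑ q ∈ (Finset.univ : Finset (Nat.Partition m)), lMod r t q := by
  have h1 : ∀ μ ∈ (Finset.univ : Finset (Nat.Partition m)), chat r t N μ = chat r t m μ :=
    fun μ _ => chat_ext r t μ hmN ht
  rw [Finset.sum_congr rfl h1]
  apply Finset.sum_nbij' (fun μ => conj μ) (fun q => conj q)
  · intro a _; exact Finset.mem_univ _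
  · intro a _; exact Finset.mem_univ _
  · intro a _; exact conj_conj a
  · intro a _; exact conj_conj a
  · intro a _
    exact (lMod_conj a ht).symm

/-- transfer between flat and restricted partitions of `n` -/
lemma sum_flat_eq_sum_restricted (r t : ℕ) (hr : 2 ≤ r) (ht : t % r ≠ 0) {n : ℕ} :
    ∑ p ∈ Finset.univ.filter (fun p : n.Partition => IsFlat r p), lMod r t p
      = ∑ μ ∈ Finset.univ.filter (fun μ : n.Partition => IsRestricted r μ), chat r t n μ := by
  apply Finset.sum_nbij' (fun p => conj p) (fun μ => conj μ)
  · intro a ha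
    simp only [Finset.mem_filter, Finset.mem_univ, true_and] at *
    exact (isFlat_iff_isRestricted_conj hr a).mp ha
  · intro a ha
    simp only [Finset.mem_filter, Finset.mem_univ, true_and] at *
    exact isFlat_conj_of_isRestricted hr a ha
  · intro a _; exact conj_conj a
  · intro a _; exact conj_conj a
  · intro a _
    rw [← lMod_conj (conj a) ht, conj_conj]



lemma inclusion_exclusion {α : Type*} [Fintype α] (U : Finset ℕ) (C : α → Finset ℕ)
    (hC : ∀ a, C a ⊆ U) (g : α → ℤ) :
    ∑ a ∈ Finset.univ.filter (fun a => C a = ∅), g a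
      = ∑ B ∈ U.powerset, (-1 : ℤ) ^ B.card
          * ∑ a ∈ Finset.univ.filter (fun a => B ⊆ C a), g a := by
  have step1 : ∀ B : Finset ℕ,
      (-1 : ℤ) ^ B.card * ∑ a ∈ Finset.univ.filter (fun a => B ⊆ C a), g a
        = ∑ a ∈ (Finset.univ : Finset α), (-1 : ℤ) ^ B.card * (if B ⊆ C a then g a else 0) := by
    intro B
    rw [Finset.sum_filter, Finset.mul_sum]
  simp only [step1]
  rw [Finset.sum_comm]
  have step2 : ∀ a : α,
      ∑ B ∈ U.powerset, (-1 : ℤ) ^ B.card * (if B ⊆ C a then g a else 0)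
        = ∑ B ∈ (C a).powerset, (-1 : ℤ) ^ B.card * g a := by
    intro a
    have hvan : ∀ B ∈ U.powerset, B ∉ (C a).powerset →
        (-1 : ℤ) ^ B.card * (if B ⊆ C a then g a else 0) = 0 := by
      intro B _ hB
      rw [if_neg (fun hss => hB (Finset.mem_powerset.mpr hss)), mul_zero]
    rw [← Finset.sum_subset (Finset.powerset_mono.mpr (hC a)) hvan]
    apply Finset.sum_congr rfl
    intro B hB
    rw [if_pos (Finset.mem_powerset.mp hB)]
  simp only [step2]
  have step3 : ∀ a : α, ∑ B ∈ (C a).powerset, (-1 : ℤ) ^ B.card * g a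
      = (if C a = ∅ then 1 else 0) * g a := by
    intro a
    rw [← Finset.sum_mul, Finset.sum_powerset_neg_one_pow_card]
  simp only [step3]
  rw [Finset.sum_filter]
  apply Finset.sum_congr rfl
  intro a _
  split_ifs <;> simp



lemma multiset_sum_le {s t : Multiset ℕ} (h : s ≤ t) : s.sum ≤ t.sum := by
  rcases Multiset.le_iff_exists_add.mp h with ⟨u, rfl⟩
  rw [Multiset.sum_add]
  omega

/-- the multiset consisting of `r` copies of each element of `B` -/
def addM (r : ℕ) (B : Finset ℕ) : Multiset ℕ := ∑ j ∈ B, Multiset.replicate r j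

lemma count_addM (r : ℕ) (B : Finset ℕ) (s : ℕ) :
    (addM r B).count s = if s ∈ B then r else 0 := by
  rw [addM, Multiset.count_sum']
  rw [Finset.sum_congr rfl (fun j _ => Multiset.count_replicate s j r)]
  rw [Finset.sum_ite_eq' B s (fun _ => r)]

lemma sum_addM (r : ℕ) (B : Finset ℕ) : (addM r B).sum = r * ∑ j ∈ B, j := by
  rw [addM]
  induction B using Finset.induction_on with
  | empty => simp
  | insert _ _ hne ih =>
    rw [Finset.sum_insert hne, Finset.sum_insert hne, Multiset.sum_add, ih,
      Multiset.sum_replicate, smul_eq_mul]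
    ring

lemma mem_addM {r : ℕ} {B : Finset ℕ} {x : ℕ} (hx : x ∈ addM r B) : x ∈ B := by
  by_contra h
  have := count_addM r B x
  rw [if_neg h] at this
  rw [← Multiset.count_pos] at hx
  omega

lemma filter_addM (r : ℕ) (B : Finset ℕ) (P : ℕ → Prop) [DecidablePred P] :
    ∃ c, Multiset.card ((addM r B).filter P) = r * c := by
  rw [addM]
  induction B using Finset.induction_on with
  | empty => exact ⟨0, by simp⟩
  | insert _ _ hne ih =>
    rcases ih with ⟨c, hc⟩
    rename_i a B'
    rw [Finset.sum_insert hne, Multiset.filter_add, Multiset.card_add, hc]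
    by_cases hPa : P a
    · refine ⟨c + 1, ?_⟩
      rw [Multiset.filter_eq_self.mpr (fun x hx => by
        rwa [Multiset.eq_of_mem_replicate hx])]
      rw [Multiset.card_replicate]
      ring
    · refine ⟨c, ?_⟩
      rw [Multiset.filter_eq_nil.mpr (fun x hx => by
        rwa [Multiset.eq_of_mem_replicate hx])]
      simp

/-- the set of part sizes occurring at least `r` times -/
def cres (r n : ℕ) (μ : n.Partition) : Finset ℕ :=
  (Finset.Icc 1 n).filter (fun j => r ≤ μ.parts.count j)

lemma cres_subset (r n : ℕ) (μ : n.Partition) : cres r n μ ⊆ Finset.Icc 1 n :=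
  Finset.filter_subset _ _

lemma cres_empty_iff {r n : ℕ} (hr : 2 ≤ r) (μ : n.Partition) :
    cres r n μ = ∅ ↔ IsRestricted r μ := by
  rw [Finset.eq_empty_iff_forall_notMem]
  constructor
  · intro h s
    by_cases hs : s ∈ Finset.Icc 1 n
    · have := h s
      rw [cres, Finset.mem_filter] at this
      push_neg at this
      have := this hs
      omega
    · rw [Multiset.count_eq_zero.mpr]
      · omega
      · intro hmem
        rcases Finset.mem_Icc.not.mp hs with h'
        push_neg at h'
        have h1 := μ.parts_pos hmem
        have h2 := parts_le μ hmem
        omega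
  · intro h j hj
    rw [cres, Finset.mem_filter] at hj
    have := h j
    omega

lemma subset_cres_iff {r n : ℕ} {B : Finset ℕ} (hB : B ⊆ Finset.Icc 1 n) (μ : n.Partition) :
    B ⊆ cres r n μ ↔ addM r B ≤ μ.parts := by
  constructor
  · intro h
    rw [Multiset.le_iff_count]
    intro s
    rw [count_addM]
    by_cases hs : s ∈ B
    · rw [if_pos hs]
      have := h hs
      rw [cres, Finset.mem_filter] at this
      exact this.2
    · rw [if_neg hs]
      exact Nat.zero_le _
  · intro h j hj
    rw [cres, Finset.mem_filter]
    refine ⟨hB hj, ?_⟩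
    have := Multiset.le_iff_count.mp h j
    rwa [count_addM, if_pos hj] at this

lemma filter_cres_empty {r n : ℕ} {B : Finset ℕ} (hB : B ⊆ Finset.Icc 1 n)
    (hw : n < r * ∑ j ∈ B, j) :
    Finset.univ.filter (fun μ : n.Partition => B ⊆ cres r n μ) = ∅ := by
  rw [Finset.eq_empty_iff_forall_notMem]
  intro μ hμ
  rw [Finset.mem_filter] at hμ
  have hle := (subset_cres_iff hB μ).mp hμ.2
  have := multiset_sum_le hle
  rw [sum_addM, μ.parts_sum] at this
  omega



lemma chat_eq_of_parts_add {r t N : ℕ} {B : Finset ℕ} {m m' : ℕ}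
    (p : m.Partition) (q : m'.Partition) (h : p.parts = q.parts + addM r B) :
    chat r t N p = chat r t N q := by
  rw [chat, chat]
  congr 1
  apply Finset.filter_congr
  intro k _
  have hmod : nge p (k + 1) % r = nge q (k + 1) % r := by
    rw [nge, nge, h, Multiset.filter_add, Multiset.card_add]
    rcases filter_addM r B (fun x => k + 1 ≤ x) with ⟨c, hc⟩
    rw [hc, Nat.add_mul_mod_self_left]
  rw [hmod]

lemma no_zero_parts_sub {n : ℕ} (μ : n.Partition) (M : Multiset ℕ) :
    Multiset.filter (fun x => x ≠ 0) (μ.parts - M) = μ.parts - M := by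
  apply Multiset.filter_eq_self.mpr
  intro x hx
  have hmem : x ∈ μ.parts := Multiset.mem_of_le tsub_le_self hx
  have := μ.parts_pos hmem
  omega

lemma no_zero_parts_addM {m n r : ℕ} {B : Finset ℕ} (hB : B ⊆ Finset.Icc 1 n) (μ : m.Partition) :
    Multiset.filter (fun x => x ≠ 0) (μ.parts + addM r B) = μ.parts + addM r B := by
  apply Multiset.filter_eq_self.mpr
  intro x hx
  rcases Multiset.mem_add.mp hx with h | h
  · have := μ.parts_pos h
    omega
  · have := hB (mem_addM h)
    rw [Finset.mem_Icc] at this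
    omega

/-- conversion of the `B`-marked restricted sum to an unconstrained sum -/
lemma bij_res {r t n : ℕ} {B : Finset ℕ} (hB : B ⊆ Finset.Icc 1 n)
    (hw : r * ∑ j ∈ B, j ≤ n) :
    ∑ μ ∈ Finset.univ.filter (fun μ : n.Partition => B ⊆ cres r n μ), chat r t n μ
      = ∑ μ' ∈ (Finset.univ : Finset ((n - r * ∑ j ∈ B, j).Partition)), chat r t n μ' := by
  set w := r * ∑ j ∈ B, j with hwdef
  have hsub : ∀ μ : n.Partition, μ ∈ Finset.univ.filter (fun μ : n.Partition => B ⊆ cres r n μ)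
      → addM r B ≤ μ.parts := by
    intro μ hμ
    exact (subset_cres_iff hB μ).mp (Finset.mem_filter.mp hμ).2
  refine Finset.sum_bij'
    (i := fun μ hμ => Nat.Partition.ofSums (n - w) (μ.parts - addM r B) (by
      have hle := hsub μ hμ
      have hre : (μ.parts - addM r B) + addM r B = μ.parts := tsub_add_cancel_of_le hle
      have hsum := congrArg Multiset.sum hre
      rw [Multiset.sum_add, μ.parts_sum, sum_addM] at hsum
      omega))
    (j := fun μ' _ => Nat.Partition.ofSums n (μ'.parts + addM r B) (by
      rw [Multiset.sum_add, μ'.parts_sum, sum_addM]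
      omega))
    ?_ ?_ ?_ ?_ ?_
  · intro μ _
    exact Finset.mem_univ _
  · intro μ' hμ'
    simp only [Finset.mem_filter, Finset.mem_univ, true_and]
    intro j hj
    rw [cres, Finset.mem_filter]
    refine ⟨hB hj, ?_⟩
    rw [Nat.Partition.ofSums_parts, no_zero_parts_addM hB μ', Multiset.count_add,
      count_addM, if_pos hj]
    omega
  · intro μ hμ
    apply Nat.Partition.ext
    rw [Nat.Partition.ofSums_parts, Nat.Partition.ofSums_parts, no_zero_parts_sub]
    rw [Multiset.filter_eq_self.mpr]
    · exact tsub_add_cancel_of_le (hsub μ hμ)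
    · intro x hx
      rcases Multiset.mem_add.mp hx with h | h
      · have hmem : x ∈ μ.parts := Multiset.mem_of_le tsub_le_self h
        have := μ.parts_pos hmem
        omega
      · have := hB (mem_addM h)
        rw [Finset.mem_Icc] at this
        omega
  · intro μ' hμ'
    apply Nat.Partition.ext
    rw [Nat.Partition.ofSums_parts, Nat.Partition.ofSums_parts, no_zero_parts_addM hB μ',
      add_tsub_cancel_right]
    apply Multiset.filter_eq_self.mpr
    intro x hx
    have := μ'.parts_pos hx
    omega
  · intro μ hμ
    apply chat_eq_of_parts_add (B := B)
    rw [Nat.Partition.ofSums_parts, no_zero_parts_sub]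
    exact (tsub_add_cancel_of_le (hsub μ hμ)).symm



/-- the multiset `{r*j : j ∈ B}` -/
def addO (r : ℕ) (B : Finset ℕ) : Multiset ℕ := B.val.map (fun j => r * j)

lemma sum_addO (r : ℕ) (B : Finset ℕ) : (addO r B).sum = r * ∑ j ∈ B, j := by
  rw [addO]
  have : (Multiset.map (fun j => r * j) B.val).sum = ∑ j ∈ B, r * j := rfl
  rw [this, Finset.mul_sum]

lemma mem_addO {r : ℕ} {B : Finset ℕ} {x : ℕ} (hx : x ∈ addO r B) :
    ∃ j ∈ B, x = r * j := by
  rcases Multiset.mem_map.mp hx with ⟨j, hj, hjx⟩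
  exact ⟨j, hj, hjx.symm⟩

lemma addO_le_iff {r n : ℕ} (hr : 2 ≤ r) {B : Finset ℕ} (μ : n.Partition) :
    addO r B ≤ μ.parts ↔ ∀ j ∈ B, r * j ∈ μ.parts := by
  constructor
  · intro h j hj
    apply Multiset.mem_of_le h
    rw [addO]
    exact Multiset.mem_map.mpr ⟨j, hj, rfl⟩
  · intro h
    rw [Multiset.le_iff_count]
    intro s
    by_cases hs : s ∈ addO r B
    · rcases mem_addO hs with ⟨j, hj, rfl⟩
      have hinj : Function.Injective (fun j => r * j) := by
        intro a b hab
        simp only at hab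
        exact Nat.eq_of_mul_eq_mul_left (by omega) hab
      rw [addO, Multiset.count_map_eq_count' _ _ hinj]
      rw [Multiset.count_eq_one_of_mem B.nodup hj]
      rw [Nat.one_le_iff_ne_zero, ← Nat.pos_iff_ne_zero, Multiset.count_pos]
      exact h j hj
    · rw [Multiset.count_eq_zero.mpr hs]
      exact Nat.zero_le _

/-- the set of `j` such that `r*j` occurs as a part -/
def creg (r n : ℕ) (μ : n.Partition) : Finset ℕ :=
  (Finset.Icc 1 n).filter (fun j => r * j ∈ μ.parts)

lemma creg_subset (r n : ℕ) (μ : n.Partition) : creg r n μ ⊆ Finset.Icc 1 n :=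
  Finset.filter_subset _ _

lemma creg_empty_iff {r n : ℕ} (hr : 2 ≤ r) (μ : n.Partition) :
    creg r n μ = ∅ ↔ IsRegular r μ := by
  rw [Finset.eq_empty_iff_forall_notMem]
  constructor
  · intro h x hx ⟨j, hjx⟩
    have hx0 := μ.parts_pos hx
    have hxn := parts_le μ hx
    have hj1 : 1 ≤ j := by
      rcases Nat.eq_zero_or_pos j with rfl | h'
      · rw [Nat.mul_zero] at hjx
        omega
      · exact h'
    have hj2 : j ≤ r * j := Nat.le_mul_of_pos_left j (by omega)
    rw [← hjx] at hj2
    have hj : j ∈ creg r n μ := by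
      rw [creg, Finset.mem_filter, Finset.mem_Icc]
      subst hjx
      exact ⟨⟨hj1, by omega⟩, hx⟩
    exact h j hj
  · intro h j hj
    rw [creg, Finset.mem_filter] at hj
    exact h (r * j) hj.2 ⟨j, rfl⟩

lemma subset_creg_iff {r n : ℕ} (hr : 2 ≤ r) {B : Finset ℕ} (μ : n.Partition) :
    B ⊆ creg r n μ ↔ (B ⊆ Finset.Icc 1 n ∧ addO r B ≤ μ.parts) := by
  rw [addO_le_iff hr]
  constructor
  · intro h
    constructor
    · exact fun j hj => (creg_subset r n μ) (h hj)
    · intro j hj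
      have := h hj
      rw [creg, Finset.mem_filter] at this
      exact this.2
  · intro ⟨h1, h2⟩ j hj
    rw [creg, Finset.mem_filter]
    exact ⟨h1 hj, h2 j hj⟩

lemma filter_creg_empty {r n : ℕ} (hr : 2 ≤ r) {B : Finset ℕ} (hB : B ⊆ Finset.Icc 1 n)
    (hw : n < r * ∑ j ∈ B, j) :
    Finset.univ.filter (fun μ : n.Partition => B ⊆ creg r n μ) = ∅ := by
  rw [Finset.eq_empty_iff_forall_notMem]
  intro μ hμ
  rw [Finset.mem_filter] at hμ
  have hle := ((subset_creg_iff hr μ).mp hμ.2).2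
  have := multiset_sum_le hle
  rw [sum_addO, μ.parts_sum] at this
  omega

lemma no_zero_parts_addO {m n r : ℕ} (hr : 2 ≤ r) {B : Finset ℕ} (hB : B ⊆ Finset.Icc 1 n)
    (μ : m.Partition) :
    Multiset.filter (fun x => x ≠ 0) (μ.parts + addO r B) = μ.parts + addO r B := by
  apply Multiset.filter_eq_self.mpr
  intro x hx
  rcases Multiset.mem_add.mp hx with h | h
  · have := μ.parts_pos h
    omega
  · rcases mem_addO h with ⟨j, hj, rfl⟩
    have := hB hj
    rw [Finset.mem_Icc] at this
    have : 1 ≤ j := this.1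
    have : r * 1 ≤ r * j := Nat.mul_le_mul_left r this
    omega

lemma lMod_eq_of_parts_addO {r t : ℕ} (ht : t % r ≠ 0) {B : Finset ℕ} {m m' : ℕ}
    (p : m.Partition) (q : m'.Partition) (h : p.parts = q.parts + addO r B) :
    lMod r t p = lMod r t q := by
  rw [lMod, lMod, h, Multiset.filter_add, Multiset.card_add]
  have : Multiset.filter (fun x => x % r = t % r) (addO r B) = 0 := by
    rw [Multiset.filter_eq_nil]
    intro x hx
    rcases mem_addO hx with ⟨j, _, rfl⟩
    rw [Nat.mul_mod_right]
    exact fun hh => ht hh.symm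
  rw [this]
  simp

/-- conversion of the `B`-marked regular sum to an unconstrained sum -/
lemma bij_reg {r t n : ℕ} (hr : 2 ≤ r) (ht : t % r ≠ 0) {B : Finset ℕ}
    (hB : B ⊆ Finset.Icc 1 n) (hw : r * ∑ j ∈ B, j ≤ n) :
    ∑ μ ∈ Finset.univ.filter (fun μ : n.Partition => B ⊆ creg r n μ), lMod r t μ
      = ∑ μ' ∈ (Finset.univ : Finset ((n - r * ∑ j ∈ B, j).Partition)), lMod r t μ' := by
  set w := r * ∑ j ∈ B, j with hwdef
  have hsub : ∀ μ : n.Partition, μ ∈ Finset.univ.filter (fun μ : n.Partition => B ⊆ creg r n μ)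
      → addO r B ≤ μ.parts := by
    intro μ hμ
    exact ((subset_creg_iff hr μ).mp (Finset.mem_filter.mp hμ).2).2
  refine Finset.sum_bij'
    (i := fun μ hμ => Nat.Partition.ofSums (n - w) (μ.parts - addO r B) (by
      have hle := hsub μ hμ
      have hre : (μ.parts - addO r B) + addO r B = μ.parts := tsub_add_cancel_of_le hle
      have hsum := congrArg Multiset.sum hre
      rw [Multiset.sum_add, μ.parts_sum, sum_addO] at hsum
      omega))
    (j := fun μ' _ => Nat.Partition.ofSums n (μ'.parts + addO r B) (by
      rw [Multiset.sum_add, μ'.parts_sum, sum_addO]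
      omega))
    ?_ ?_ ?_ ?_ ?_
  · intro μ _
    exact Finset.mem_univ _
  · intro μ' hμ'
    simp only [Finset.mem_filter, Finset.mem_univ, true_and]
    rw [subset_creg_iff hr]
    refine ⟨hB, ?_⟩
    rw [Nat.Partition.ofSums_parts, no_zero_parts_addO hr hB μ']
    exact Multiset.le_add_left _ _
  · intro μ hμ
    apply Nat.Partition.ext
    rw [Nat.Partition.ofSums_parts, Nat.Partition.ofSums_parts, no_zero_parts_sub]
    rw [Multiset.filter_eq_self.mpr]
    · exact tsub_add_cancel_of_le (hsub μ hμ)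
    · intro x hx
      rcases Multiset.mem_add.mp hx with h | h
      · have hmem : x ∈ μ.parts := Multiset.mem_of_le tsub_le_self h
        have := μ.parts_pos hmem
        omega
      · rcases mem_addO h with ⟨j, hj, rfl⟩
        have := hB hj
        rw [Finset.mem_Icc] at this
        have h1 : 1 ≤ j := this.1
        have : r * 1 ≤ r * j := Nat.mul_le_mul_left r h1
        omega
  · intro μ' hμ'
    apply Nat.Partition.ext
    rw [Nat.Partition.ofSums_parts, Nat.Partition.ofSums_parts, no_zero_parts_addO hr hB μ',
      add_tsub_cancel_right]
    apply Multiset.filter_eq_self.mpr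
    intro x hx
    have := μ'.parts_pos hx
    omega
  · intro μ hμ
    apply lMod_eq_of_parts_addO ht (B := B)
    rw [Nat.Partition.ofSums_parts, no_zero_parts_sub]
    exact (tsub_add_cancel_of_le (hsub μ hμ)).symm




theorem parts_mod_regular_eq_flat (n r t : ℕ) (hr : 2 ≤ r) (ht1 : 1 ≤ t) (ht2 : t ≤ r - 1) :
    (∑ p ∈ Finset.univ.filter (fun p : n.Partition => IsRegular r p), lMod r t p) =
      ∑ p ∈ Finset.univ.filter (fun p : n.Partition => IsFlat r p), lMod r t p := by
  have ht : t % r ≠ 0 := by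
    rw [Nat.mod_eq_of_lt (by omega)]
    omega
  have key : ∀ B ∈ (Finset.Icc 1 n).powerset,
      (∑ μ ∈ Finset.univ.filter (fun μ : n.Partition => B ⊆ creg r n μ), lMod r t μ)
        = ∑ μ ∈ Finset.univ.filter (fun μ : n.Partition => B ⊆ cres r n μ), chat r t n μ := by
    intro B hBp
    have hB := Finset.mem_powerset.mp hBp
    rcases le_or_gt (r * ∑ j ∈ B, j) n with hw | hw
    · rw [bij_reg hr ht hB hw, bij_res hB hw]
      exact (sum_chat_eq_sum_lMod r t ht (by omega)).symm
    · rw [filter_creg_empty hr hB hw, filter_cres_empty hB hw, Finset.sum_empty,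
        Finset.sum_empty]
  have hz : (∑ p ∈ Finset.univ.filter (fun p : n.Partition => IsRegular r p), (lMod r t p : ℤ))
      = ∑ p ∈ Finset.univ.filter (fun p : n.Partition => IsFlat r p), (lMod r t p : ℤ) := by
    have hreg : Finset.univ.filter (fun p : n.Partition => IsRegular r p)
        = Finset.univ.filter (fun p : n.Partition => creg r n p = ∅) := by
      apply Finset.filter_congr
      intro μ _
      exact (creg_empty_iff hr μ).symm
    have hres : Finset.univ.filter (fun p : n.Partition => IsRestricted r p)
        = Finset.univ.filter (fun p : n.Partition => cres r n p = ∅) := by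
      apply Finset.filter_congr
      intro μ _
      exact (cres_empty_iff hr μ).symm
    calc ∑ p ∈ Finset.univ.filter (fun p : n.Partition => IsRegular r p), (lMod r t p : ℤ)
        = ∑ p ∈ Finset.univ.filter (fun p : n.Partition => creg r n p = ∅), (lMod r t p : ℤ) := by
          rw [hreg]
      _ = ∑ B ∈ (Finset.Icc 1 n).powerset, (-1 : ℤ) ^ B.card
            * ∑ μ ∈ Finset.univ.filter (fun μ : n.Partition => B ⊆ creg r n μ), (lMod r t μ : ℤ) :=
          inclusion_exclusion (Finset.Icc 1 n) (creg r n) (creg_subset r n) _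
      _ = ∑ B ∈ (Finset.Icc 1 n).powerset, (-1 : ℤ) ^ B.card
            * ∑ μ ∈ Finset.univ.filter (fun μ : n.Partition => B ⊆ cres r n μ), (chat r t n μ : ℤ) := by
          apply Finset.sum_congr rfl
          intro B hBp
          congr 1
          have hk := key B hBp
          rw [← Nat.cast_sum, ← Nat.cast_sum, hk]
      _ = ∑ p ∈ Finset.univ.filter (fun p : n.Partition => cres r n p = ∅), (chat r t n p : ℤ) :=
          (inclusion_exclusion (Finset.Icc 1 n) (cres r n) (cres_subset r n) _).symm
      _ = ∑ p ∈ Finset.univ.filter (fun p : n.Partition => IsRestricted r p), (chat r t n p : ℤ) := by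
          rw [hres]
      _ = ∑ p ∈ Finset.univ.filter (fun p : n.Partition => IsFlat r p), (lMod r t p : ℤ) := by
          have hk := sum_flat_eq_sum_restricted r t hr ht (n := n)
          rw [← Nat.cast_sum, ← Nat.cast_sum, hk]
  rw [← Nat.cast_sum, ← Nat.cast_sum] at hz
  exact Nat.cast_injective hz


end BeckPaper
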